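/- Let k be an algebraically closed field of characteristic zero, V a finite-dimensional k-vector space with a nondegenerate symmetric bilinear form B, and e ∈ End(V) a nilpotent endomorphism satisfying B(e·v, w) = B(v, e·w) for all v,w ∈ V. Set m := dim Ker(e). Then there exist vectors w₁,…,w_m ∈ V and integers d₁,…,d_m ≥ 0 such that e^{d_i+1}·w_i = 0, the vectors {e^s·w_i : 1 ≤ i ≤ m, 0 ≤ s ≤ d_i} form a basis of V, B(V_i, V_j) = 0 for i ≠ j, and the restriction of B to each V_i is nondegenerate, where V_i := span{e^s·w_i : 0 ≤ s ≤ d_i}. -/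

import Mathlib

/-!
Adapted Jordan (cyclic) bases for a nilpotent endomorphism `e` lying in the odd part of
the ℤ₂-grading of `gl(V)` defined by a nondegenerate **symmetric** form `B`
(i.e. `B(e·v, w) = B(v, e·w)`): the cyclic subspaces `V_i` may be chosen pairwise
`B`-orthogonal with the restriction of `B` to each `V_i` nondegenerate.
-/

open Module

open Submodule

namespace AdaptedCyclicAux

def sigmaFinConsEquiv {m : ℕ} {α : Fin (m + 1) → Type*} :
    (Σ i, α i) ≃ (α 0 ⊕ Σ i : Fin m, α i.succ) where
  toFun p := Fin.cases (motive := fun i => α i → α 0 ⊕ Σ i : Fin m, α i.succ)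
      Sum.inl (fun i a => Sum.inr ⟨i, a⟩) p.1 p.2
  invFun q := q.elim (fun a => ⟨0, a⟩) fun p => ⟨p.1.succ, p.2⟩
  left_inv := by
    rintro ⟨i, a⟩
    induction i using Fin.cases <;> rfl
  right_inv := by rintro (a | ⟨i, a⟩) <;> rfl

variable {k V : Type*} [Field k] [AddCommGroup V] [Module k V]

variable (B : V →ₗ[k] V →ₗ[k] k) (e : Module.End k V)

lemma pow_adjoint (he : ∀ v w : V, B (e v) w = B v (e w)) (s : ℕ) (v w : V) :
    B ((e ^ s) v) w = B v ((e ^ s) w) := by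
  induction s generalizing v w with
  | zero => simp
  | succ n ih =>
    have h' : B ((e ^ (n + 1)) v) w = B ((e ^ n) (e v)) w := by
      rw [pow_succ, Module.End.mul_apply]
    rw [h', ih, he, ← Module.End.mul_apply, ← pow_succ']

lemma pow_eq_zero_of_lt {d j : ℕ} {w₀ : V} (h : (e ^ (d + 1)) w₀ = 0) (hj : d < j) :
    (e ^ j) w₀ = 0 := by
  have hpow : e ^ j = e ^ (j - (d + 1)) * e ^ (d + 1) := by rw [← pow_add]; congr 1; omega
  rw [hpow, Module.End.mul_apply, h, map_zero]

lemma coeffs_eq_zero (he : ∀ v w : V, B (e v) w = B v (e w))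
    {d₀ : ℕ} {w₀ : V} (h1 : (e ^ (d₀ + 1)) w₀ = 0)
    (h2 : B w₀ ((e ^ d₀) w₀) ≠ 0) (a : Fin (d₀ + 1) → k)
    (h : ∀ t : ℕ, t ≤ d₀ → B (∑ s, a s • (e ^ (s : ℕ)) w₀) ((e ^ t) w₀) = 0) :
    ∀ r, a r = 0 := by
  have hpair : ∀ s t : ℕ, B ((e ^ s) w₀) ((e ^ t) w₀) = B w₀ ((e ^ (s + t)) w₀) := by
    intro s t
    rw [pow_adjoint B e he s, ← Module.End.mul_apply, ← pow_add]
  have key : ∀ r : ℕ, ∀ hr : r < d₀ + 1, a ⟨r, hr⟩ = 0 := by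
    intro r
    induction r using Nat.strong_induction_on with
    | _ r ih =>
      intro hr
      have h0 : ∑ s : Fin (d₀ + 1), a s * B ((e ^ (s : ℕ)) w₀) ((e ^ (d₀ - r)) w₀) = 0 := by
        have := h (d₀ - r) (by omega)
        rw [map_sum, LinearMap.sum_apply] at this
        simpa [smul_eq_mul] using this
      rw [Finset.sum_eq_single (⟨r, hr⟩ : Fin (d₀ + 1))] at h0
      · rw [hpair, show r + (d₀ - r) = d₀ by omega] at h0
        rcases mul_eq_zero.mp h0 with h' | h'
        · exact h'
        · exact absurd h' h2
      · intro s _ hsne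
        have hsr : (s : ℕ) ≠ r := fun hh => hsne (Fin.ext hh)
        rcases lt_or_gt_of_ne hsr with hlt | hgt
        · have := ih (s : ℕ) hlt s.isLt
          simp only [Fin.eta] at this
          rw [this, zero_mul]
        · rw [hpair, pow_eq_zero_of_lt e h1 (by omega), map_zero, mul_zero]
      · intro habs
        exact absurd (Finset.mem_univ _) habs
  intro r
  have := key (r : ℕ) r.isLt
  simpa [Fin.eta] using this

lemma block_li (he : ∀ v w : V, B (e v) w = B v (e w))
    {d₀ : ℕ} {w₀ : V} (h1 : (e ^ (d₀ + 1)) w₀ = 0)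
    (h2 : B w₀ ((e ^ d₀) w₀) ≠ 0) :
    LinearIndependent k (fun s : Fin (d₀ + 1) => (e ^ (s : ℕ)) w₀) := by
  rw [Fintype.linearIndependent_iff]
  intro g hg
  refine coeffs_eq_zero B e he h1 h2 g fun t ht => ?_
  rw [hg, map_zero, LinearMap.zero_apply]

lemma block_nondeg (he : ∀ v w : V, B (e v) w = B v (e w))
    {d₀ : ℕ} {w₀ : V} (h1 : (e ^ (d₀ + 1)) w₀ = 0)
    (h2 : B w₀ ((e ^ d₀) w₀) ≠ 0) :
    ∀ v ∈ span k (Set.range fun s : Fin (d₀ + 1) => (e ^ (s : ℕ)) w₀),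
      (∀ u ∈ span k (Set.range fun s : Fin (d₀ + 1) => (e ^ (s : ℕ)) w₀), B v u = 0) →
        v = 0 := by
  intro v hv hbv
  rw [mem_span_range_iff_exists_fun] at hv
  obtain ⟨a, rfl⟩ := hv
  have hz : ∀ r, a r = 0 := by
    refine coeffs_eq_zero B e he h1 h2 a fun t ht => ?_
    exact hbv _ (subset_span ⟨⟨t, by omega⟩, rfl⟩)
  simp [hz]

lemma set_eq (d₀ : ℕ) (w₀ : V) :
    {x : V | ∃ s : ℕ, s ≤ d₀ ∧ x = (e ^ s) w₀} =
      Set.range fun s : Fin (d₀ + 1) => (e ^ (s : ℕ)) w₀ := by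
  ext x
  constructor
  · rintro ⟨s, hs, rfl⟩; exact ⟨⟨s, by omega⟩, rfl⟩
  · rintro ⟨s, rfl⟩; exact ⟨(s : ℕ), by omega, rfl⟩

lemma main_ind [FiniteDimensional k V]
    (hBsymm : ∀ v w : V, B v w = B w v)
    (he : ∀ v w : V, B (e v) w = B v (e w))
    {N : ℕ} (hN : e ^ N = 0) (h2k : (2 : k) ≠ 0) :
    ∀ n : ℕ, ∀ W : Submodule k V, finrank k ↥W = n →
      (∀ v ∈ W, e v ∈ W) →
      (∀ v ∈ W, (∀ u ∈ W, B v u = 0) → v = 0) →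
      ∃ (m : ℕ) (w : Fin m → V) (d : Fin m → ℕ),
        (∀ i, (e ^ (d i + 1)) (w i) = 0) ∧
        LinearIndependent k
          (fun p : Σ i : Fin m, Fin (d i + 1) => (e ^ (p.2 : ℕ)) (w p.1)) ∧
        Submodule.span k
          (Set.range fun p : Σ i : Fin m, Fin (d i + 1) => (e ^ (p.2 : ℕ)) (w p.1)) = W ∧
        (∀ i j : Fin m, i ≠ j → ∀ s t : ℕ, s ≤ d i → t ≤ d j →
          B ((e ^ s) (w i)) ((e ^ t) (w j)) = 0) ∧
        (∀ i : Fin m,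
          ∀ v ∈ Submodule.span k {x : V | ∃ s : ℕ, s ≤ d i ∧ x = (e ^ s) (w i)},
            (∀ u ∈ Submodule.span k {x : V | ∃ s : ℕ, s ≤ d i ∧ x = (e ^ s) (w i)},
              B v u = 0) → v = 0) := by
  intro n
  induction n using Nat.strong_induction_on with
  | _ n ih =>
  intro W hrank hinv hnd
  classical
  by_cases hbot : W = ⊥
  · haveI : IsEmpty (Σ i : Fin 0, Fin ((Fin.elim0 : Fin 0 → ℕ) i + 1)) :=
      ⟨fun p => p.1.elim0⟩
    refine ⟨0, Fin.elim0, Fin.elim0, fun i => i.elim0, linearIndependent_empty_type, ?_,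
      fun i => i.elim0, fun i => i.elim0⟩
    rw [hbot, Set.range_eq_empty, span_empty]
  -- W ≠ ⊥
  obtain ⟨x0, hx0W, hx0⟩ := W.ne_bot_iff.mp hbot
  have hex : ∃ j : ℕ, ∀ v ∈ W, (e ^ j) v = 0 :=
    ⟨N, fun v _ => by rw [hN]; rfl⟩
  have hson : Nat.find hex ≠ 0 := by
    intro h
    have hsp := Nat.find_spec hex
    rw [h] at hsp
    exact hx0 (by simpa using hsp x0 hx0W)
  obtain ⟨d₀, hd₀⟩ : ∃ d₀, Nat.find hex = d₀ + 1 := ⟨Nat.find hex - 1, by omega⟩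
  have hzero : ∀ v ∈ W, (e ^ (d₀ + 1)) v = 0 := by rw [← hd₀]; exact Nat.find_spec hex
  have hnotall := Nat.find_min hex (m := d₀) (by omega)
  push_neg at hnotall
  obtain ⟨v0, hv0W, hv0⟩ := hnotall
  have hpowW : ∀ (s : ℕ) (v : V), v ∈ W → (e ^ s) v ∈ W := by
    intro s
    induction s with
    | zero => intro v hv; simpa using hv
    | succ t iht =>
      intro v hv
      rw [pow_succ', Module.End.mul_apply]
      exact hinv _ (iht v hv)
  have hcomp : ∀ (s : ℕ) (x : V), e ((e ^ s) x) = (e ^ (s + 1)) x := fun s x => by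
    rw [← Module.End.mul_apply, ← pow_succ']
  -- find the cyclic vector w₀
  obtain ⟨w₀, hw₀W, hw₀⟩ : ∃ w₀ ∈ W, B w₀ ((e ^ d₀) w₀) ≠ 0 := by
    by_cases hv : B v0 ((e ^ d₀) v0) ≠ 0
    · exact ⟨v0, hv0W, hv⟩
    push_neg at hv
    obtain ⟨u, huW, hu⟩ : ∃ u ∈ W, B ((e ^ d₀) v0) u ≠ 0 := by
      by_contra hcon
      push_neg at hcon
      exact hv0 (hnd _ (hpowW d₀ v0 hv0W) hcon)
    by_cases hu2 : B u ((e ^ d₀) u) ≠ 0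
    · exact ⟨u, huW, hu2⟩
    push_neg at hu2
    refine ⟨v0 + u, W.add_mem hv0W huW, ?_⟩
    have hx : B v0 ((e ^ d₀) u) = B ((e ^ d₀) v0) u := (pow_adjoint B e he d₀ v0 u).symm
    have hy : B u ((e ^ d₀) v0) = B ((e ^ d₀) v0) u := hBsymm _ _
    have hexp : B (v0 + u) ((e ^ d₀) (v0 + u)) = 2 * B ((e ^ d₀) v0) u := by
      rw [map_add]
      simp only [map_add, LinearMap.add_apply]
      rw [hv, hu2, hx, hy]
      ring
    rw [hexp]
    exact mul_ne_zero h2k hu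
  have h1w : (e ^ (d₀ + 1)) w₀ = 0 := hzero w₀ hw₀W
  set f : Fin (d₀ + 1) → V := fun s => (e ^ (s : ℕ)) w₀ with hf
  set W₀ := span k (Set.range f) with hW₀
  have hfW₀ : ∀ s : ℕ, (e ^ s) w₀ ∈ W₀ := by
    intro s
    by_cases hs : s ≤ d₀
    · exact subset_span ⟨⟨s, by omega⟩, rfl⟩
    · rw [pow_eq_zero_of_lt e h1w (by omega)]; exact zero_mem _
  have hW₀W : W₀ ≤ W := by
    rw [hW₀, span_le]
    rintro x ⟨s, rfl⟩
    exact hpowW _ _ hw₀W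
  have hW₀inv : ∀ v ∈ W₀, e v ∈ W₀ := by
    intro v hv
    induction hv using span_induction with
    | mem x hx =>
      obtain ⟨s, rfl⟩ := hx
      rw [show f s = (e ^ (s : ℕ)) w₀ from rfl, hcomp]
      exact hfW₀ _
    | zero => simp
    | add x y _ _ hx hy => rw [map_add]; exact add_mem hx hy
    | smul a x _ hx => rw [map_smul]; exact smul_mem _ _ hx
  have hli0 : LinearIndependent k f := block_li B e he h1w hw₀
  have hnd0 : ∀ v ∈ W₀, (∀ u ∈ W₀, B v u = 0) → v = 0 := block_nondeg B e he h1w hw₀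
  have hrefl : LinearMap.IsRefl B := fun x y h => by rw [hBsymm]; exact h
  have hres : (LinearMap.BilinForm.restrict B W₀).Nondegenerate := by
    refine ⟨?_, ?_⟩
    · rintro ⟨v, hv⟩ hb
      refine Subtype.ext (hnd0 v hv fun u hu => ?_)
      simpa using hb ⟨u, hu⟩
    · rintro ⟨v, hv⟩ hb
      refine Subtype.ext (hnd0 v hv fun u hu => ?_)
      rw [hBsymm]
      simpa using hb ⟨u, hu⟩
  have hcompl : IsCompl W₀ (LinearMap.BilinForm.orthogonal B W₀) :=
    LinearMap.BilinForm.isCompl_orthogonal_of_restrict_nondegenerate hrefl hres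
  set O := LinearMap.BilinForm.orthogonal B W₀ with hO
  set W₁ := O ⊓ W with hW₁def
  have hsup : W₀ ⊔ W₁ = W := by
    have hcd : W₀ ⊔ O = ⊤ := hcompl.codisjoint.eq_top
    rw [hW₁def, ← sup_inf_assoc_of_le O hW₀W, hcd, top_inf_eq]
  have hdisj : Disjoint W₀ W₁ := hcompl.disjoint.mono_right inf_le_left
  have hW₁W : W₁ ≤ W := inf_le_right
  have hW₁inv : ∀ v ∈ W₁, e v ∈ W₁ := by
    intro v hv
    refine Submodule.mem_inf.mpr ⟨?_, hinv v (hW₁W hv)⟩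
    intro u hu
    show B u (e v) = 0
    rw [← he]
    exact (Submodule.mem_inf.mp hv).1 (e u) (hW₀inv u hu)
  have hnd1 : ∀ v ∈ W₁, (∀ u ∈ W₁, B v u = 0) → v = 0 := by
    intro v hv hb
    refine hnd v (hW₁W hv) fun u hu => ?_
    rw [← hsup] at hu
    obtain ⟨a, ha, b, hbmem, rfl⟩ := Submodule.mem_sup.mp hu
    rw [map_add, hb b hbmem, add_zero, hBsymm]
    exact (Submodule.mem_inf.mp hv).1 a ha
  have hw₀mem : w₀ ∈ W₀ := by
    have := hfW₀ 0
    simpa using this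
  have hW₀pos : 0 < finrank k ↥W₀ := by
    have hw0ne : w₀ ≠ 0 := by
      intro h
      apply hw₀
      rw [h]
      simp
    refine Module.finrank_pos_iff_exists_ne_zero.mpr ⟨⟨w₀, hw₀mem⟩, ?_⟩
    simp [Subtype.ext_iff, hw0ne]
  have hrk : finrank k ↥W₀ + finrank k ↥W₁ = n := by
    have hh := Submodule.finrank_sup_add_finrank_inf_eq W₀ W₁
    rw [hsup, disjoint_iff.mp hdisj, finrank_bot, add_zero, hrank] at hh
    omega
  obtain ⟨m', w', d', ha', hb', hc', hd', he'⟩ :=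
    ih (finrank k ↥W₁) (by omega) W₁ rfl hW₁inv hnd1
  have hgmem : ∀ (j : Fin m') (t : ℕ), t ≤ d' j → (e ^ t) (w' j) ∈ W₁ := by
    intro j t ht
    rw [← hc']
    exact subset_span ⟨⟨j, ⟨t, by omega⟩⟩, rfl⟩
  set g : (Σ i : Fin m', Fin (d' i + 1)) → V := fun p => (e ^ (p.2 : ℕ)) (w' p.1) with hg
  have hFeq :
      (fun p : (Σ i : Fin (m' + 1), Fin ((Fin.cons d₀ d' : Fin (m' + 1) → ℕ) i + 1)) =>
          (e ^ (p.2 : ℕ)) ((Fin.cons w₀ w' : Fin (m' + 1) → V) p.1)) =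
        Sum.elim f g ∘
          (sigmaFinConsEquiv (α := fun i => Fin ((Fin.cons d₀ d' : Fin (m' + 1) → ℕ) i + 1))) := by
    funext p
    obtain ⟨i, s⟩ := p
    rcases Fin.eq_zero_or_eq_succ i with rfl | ⟨j, rfl⟩ <;> rfl
  refine ⟨m' + 1, Fin.cons w₀ w', Fin.cons d₀ d', ?_, ?_, ?_, ?_, ?_⟩
  · intro i
    rcases Fin.eq_zero_or_eq_succ i with rfl | ⟨j, rfl⟩
    · simpa [Fin.cons_zero] using h1w
    · simpa [Fin.cons_succ] using ha' j
  · rw [hFeq]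
    have hli1 : LinearIndependent k (Sum.elim f g) := by
      refine hli0.sum_type hb' ?_
      rw [hc']
      exact hdisj
    exact hli1.comp _ (Equiv.injective _)
  · rw [hFeq]
    erw [Set.range_comp]
    have hru : Set.range (⇑(sigmaFinConsEquiv
        (α := fun i => Fin ((Fin.cons d₀ d' : Fin (m' + 1) → ℕ) i + 1)))) = Set.univ :=
      (Equiv.surjective _).range_eq
    erw [hru, Set.image_univ]
    rw [Set.Sum.elim_range, span_union, hc']
    exact hsup
  · intro i j hij s t hs ht
    rcases Fin.eq_zero_or_eq_succ i with rfl | ⟨i', rfl⟩ <;>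
      rcases Fin.eq_zero_or_eq_succ j with rfl | ⟨j', rfl⟩
    · exact absurd rfl hij
    · simp only [Fin.cons_zero, Fin.cons_succ] at hs ht ⊢
      exact (Submodule.mem_inf.mp (hgmem j' t ht)).1 _ (hfW₀ s)
    · simp only [Fin.cons_zero, Fin.cons_succ] at hs ht ⊢
      rw [hBsymm]
      exact (Submodule.mem_inf.mp (hgmem i' s hs)).1 _ (hfW₀ t)
    · simp only [Fin.cons_succ] at hs ht ⊢
      exact hd' i' j' (fun h => hij (by rw [h])) s t hs ht
  · intro i
    rcases Fin.eq_zero_or_eq_succ i with rfl | ⟨j, rfl⟩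
    · simp only [Fin.cons_zero]
      rw [set_eq]
      exact hnd0
    · simp only [Fin.cons_succ]
      exact he' j

end AdaptedCyclicAux


open AdaptedCyclicAux in
theorem adapted_cyclic_vectors_orthogonal
    {k V : Type*} [Field k] [IsAlgClosed k] [CharZero k]
    [AddCommGroup V] [Module k V] [FiniteDimensional k V]
    (B : V →ₗ[k] V →ₗ[k] k)
    (hBnd : ∀ v : V, (∀ w : V, B v w = 0) → v = 0)
    (hBsymm : ∀ v w : V, B v w = B w v)
    (e : Module.End k V) (hnil : IsNilpotent e)
    (he : ∀ v w : V, B (e v) w = B v (e w)) :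
    ∃ (m : ℕ), m = finrank k ↥(LinearMap.ker e) ∧
    ∃ (w : Fin m → V) (d : Fin m → ℕ),
      (∀ i, (e ^ (d i + 1)) (w i) = 0) ∧
      LinearIndependent k
        (fun p : Σ i : Fin m, Fin (d i + 1) => (e ^ (p.2 : ℕ)) (w p.1)) ∧
      Submodule.span k
        (Set.range fun p : Σ i : Fin m, Fin (d i + 1) => (e ^ (p.2 : ℕ)) (w p.1)) = ⊤ ∧
      (∀ i j : Fin m, i ≠ j → ∀ s t : ℕ, s ≤ d i → t ≤ d j →
        B ((e ^ s) (w i)) ((e ^ t) (w j)) = 0) ∧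
      (∀ i : Fin m,
        ∀ v ∈ Submodule.span k {x : V | ∃ s : ℕ, s ≤ d i ∧ x = (e ^ s) (w i)},
          (∀ u ∈ Submodule.span k {x : V | ∃ s : ℕ, s ≤ d i ∧ x = (e ^ s) (w i)},
            B v u = 0) → v = 0) := by
  classical
  obtain ⟨N, hN⟩ := hnil
  obtain ⟨m, w, d, h1, h2, h3, h4, h5⟩ :=
    main_ind B e hBsymm he hN two_ne_zero (finrank k ↥(⊤ : Submodule k V)) ⊤ rfl
      (fun v _ => Submodule.mem_top)
      (fun v _ h => hBnd v fun u => h u Submodule.mem_top)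
  -- count the kernel dimension
  have hb : Basis (Σ i : Fin m, Fin (d i + 1)) k V := Basis.mk h2 (by rw [h3])
  have hdim : finrank k V = (∑ i, d i) + m := by
    rw [finrank_eq_card_basis hb, Fintype.card_sigma]
    simp [Finset.sum_add_distrib, Finset.card_univ]
  have hcomp : ∀ (s : ℕ) (x : V), e ((e ^ s) x) = (e ^ (s + 1)) x := fun s x => by
    rw [← Module.End.mul_apply, ← pow_succ']
  set g2 : (Σ i : Fin m, Fin (d i)) → V := fun p => (e ^ ((p.2 : ℕ) + 1)) (w p.1) with hg2
  have hrange : LinearMap.range e = Submodule.span k (Set.range g2) := by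
    rw [LinearMap.range_eq_map, ← h3, Submodule.map_span]
    apply le_antisymm
    · rw [Submodule.span_le]
      rintro x ⟨y, ⟨p, rfl⟩, rfl⟩
      show e ((e ^ (p.2 : ℕ)) (w p.1)) ∈ _
      rw [hcomp]
      by_cases hlt : (p.2 : ℕ) < d p.1
      · exact Submodule.subset_span ⟨⟨p.1, ⟨(p.2 : ℕ), hlt⟩⟩, rfl⟩
      · have hq : (p.2 : ℕ) = d p.1 := by have := p.2.isLt; omega
        rw [hq, h1]
        exact Submodule.zero_mem _
    · rw [Submodule.span_le]
      rintro x ⟨p, rfl⟩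
      exact Submodule.subset_span
        ⟨(e ^ ((p.2 : ℕ))) (w p.1), ⟨⟨p.1, ⟨(p.2 : ℕ), by omega⟩⟩, rfl⟩, hcomp _ _⟩
  have hjlt : ∀ p : Σ i : Fin m, Fin (d i), (p.2 : ℕ) + 1 < d p.1 + 1 := fun p => by
    have := p.2.isLt; omega
  set jmap : (Σ i : Fin m, Fin (d i)) → (Σ i : Fin m, Fin (d i + 1)) :=
    fun p => ⟨p.1, ⟨(p.2 : ℕ) + 1, hjlt p⟩⟩ with hjmap
  have hinj : Function.Injective jmap := by
    rintro ⟨i, s⟩ ⟨j, t⟩ hpq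
    obtain ⟨h1', h2'⟩ := Sigma.mk.inj_iff.mp hpq
    subst h1'
    simp only [heq_eq_eq, Fin.mk.injEq, add_left_inj] at h2'
    exact Sigma.eq rfl (by simpa using Fin.ext h2')
  have hg2li : LinearIndependent k g2 := by
    have hcom := h2.comp jmap hinj
    have hce : (fun p : Σ i : Fin m, Fin (d i + 1) => (e ^ (p.2 : ℕ)) (w p.1)) ∘ jmap = g2 := by
      funext p
      rfl
    rwa [hce] at hcom
  have hrk2 : finrank k ↥(LinearMap.range e) = ∑ i, d i := by
    rw [hrange, finrank_span_eq_card hg2li, Fintype.card_sigma]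
    simp
  have hfr := LinearMap.finrank_range_add_finrank_ker e
  rw [hrk2, hdim] at hfr
  exact ⟨m, by omega, w, d, h1, h2, h3, h4, h5⟩
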